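/- Let F be a field of characteristic zero with a derivation δ, let K be a subfield of F closed under δ, and let η ∈ F be transcendental over K with F = K(η) and δη = p·η for some p ∈ K. Let c ∈ K and f ∈ F satisfy δf = c·η. Write f uniquely as f = Q(η) + R(η)/B(η), where Q, R, B ∈ K[Y], B is monic, deg R < deg B, and gcd(R, B) = 1, and let a₁ ∈ K be the coefficient of Y¹ in Q. Then c = δa₁ + p·a₁; equivalently, δf = δ(a₁·η). -/

import Mathlib

open Polynomial

/-- Coefficientwise application of a map (sending 0 to 0) to a polynomial. -/
noncomputable def Dmap {K : Type*} [Semiring K] (g : K → K) (hg : g 0 = 0)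
    (P : Polynomial K) : Polynomial K :=
  ⟨AddMonoidAlgebra.ofCoeff (Finsupp.mapRange g hg P.toFinsupp.coeff)⟩

theorem Dmap_coeff {K : Type*} [Semiring K] (g : K → K) (hg : g 0 = 0)
    (P : Polynomial K) (n : ℕ) : (Dmap g hg P).coeff n = g (P.coeff n) := by
  simp [Dmap, coeff_ofFinsupp, Finsupp.mapRange_apply, toFinsupp_apply]

/-- **Transcendental case in the proof of (2) ⟹ (3) of the Reduction Lemma** (Lemma 3.1).
Let `F` be a field of characteristic zero with a derivation `δ`, `K` a subfield closed
under `δ`, and `η` transcendental over `K` with `F = K(η)` and `δη = p·η`, `p ∈ K`.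
If `c ∈ K` and `f ∈ F` satisfy `δf = c·η`, and `f = Q(η) + R(η)/B(η)` is the unique
representation with `Q, R, B ∈ K[Y]`, `B` monic, `deg R < deg B`, `gcd(R,B) = 1`,
then `c = δa₁ + p·a₁`, where `a₁` is the coefficient of `Y¹` in `Q`. -/
theorem reduction_lemma_transcendental_case
    (F : Type*) [Field F] [CharZero F]
    (δ : F → F)
    (hadd : ∀ a b : F, δ (a + b) = δ a + δ b)
    (hmul : ∀ a b : F, δ (a * b) = a * δ b + δ a * b)
    (K : Subfield F)
    (hKδ : ∀ a ∈ K, δ a ∈ K)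
    (η : F) (htrans : Transcendental K η)
    (hgen : Subfield.closure (insert η (K : Set F)) = ⊤)
    (p : F) (hp : p ∈ K) (hδη : δ η = p * η)
    (c : F) (hc : c ∈ K)
    (f : F) (hf : δ f = c * η)
    (Q R B : Polynomial K)
    (hB : B.Monic) (hRB : R.degree < B.degree) (hcop : IsCoprime R B)
    (hrep : f = Polynomial.aeval η Q + Polynomial.aeval η R / Polynomial.aeval η B) :
    c = δ ((Q.coeff 1 : K) : F) + p * ((Q.coeff 1 : K) : F) := by
  classical
  -- basic derivation facts
  have hδ0 : δ 0 = 0 := by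
    have h := hadd 0 0
    rw [add_zero] at h
    exact (left_eq_add.mp h)
  have hδ1 : δ 1 = 0 := by
    have h := hmul 1 1
    simp only [one_mul, mul_one] at h
    exact (left_eq_add.mp h)
  have hcoe : ∀ x : K, algebraMap K F x = (x : F) := fun x => rfl
  -- the induced map on K
  set g : K → K := fun a => ⟨δ a, hKδ a a.2⟩ with hg_def
  have hg0 : g 0 = 0 := by
    apply Subtype.ext
    simpa [hg_def] using hδ0
  have hgadd : ∀ a b : K, g (a + b) = g a + g b := by
    intro a b
    apply Subtype.ext
    simpa [hg_def] using hadd a b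
  -- the elements p and c inside K
  set pK : K := ⟨p, hp⟩ with hpK_def
  set cK : K := ⟨c, hc⟩ with hcK_def
  -- the polynomial-level derivation
  set Δ : Polynomial K → Polynomial K :=
    fun P => Dmap g hg0 P + C pK * X * derivative P with hΔ_def
  have hDadd : ∀ u v : Polynomial K,
      Dmap g hg0 (u + v) = Dmap g hg0 u + Dmap g hg0 v := by
    intro u v
    ext n
    simp only [coeff_add, Dmap_coeff, hgadd]
  have hΔadd : ∀ u v : Polynomial K, Δ (u + v) = Δ u + Δ v := by
    intro u v
    simp only [hΔ_def, hDadd, derivative_add, mul_add]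
    ring
  have hΔcoeff0 : ∀ P : Polynomial K, (Δ P).coeff 0 = g (P.coeff 0) := by
    intro P
    simp [hΔ_def, Dmap_coeff, coeff_C_mul, mul_assoc, mul_coeff_zero]
  have hΔcoeffsucc : ∀ (P : Polynomial K) (n : ℕ),
      (Δ P).coeff (n + 1) = g (P.coeff (n + 1)) + pK * (P.coeff (n + 1) * (n + 1)) := by
    intro P n
    simp [hΔ_def, Dmap_coeff, mul_assoc, coeff_C_mul, coeff_X_mul, coeff_derivative]
  have hΔzero : ∀ (P : Polynomial K) (n : ℕ), P.coeff n = 0 → (Δ P).coeff n = 0 := by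
    intro P n h
    cases n with
    | zero => rw [hΔcoeff0, h, hg0]
    | succ n => rw [hΔcoeffsucc, h, hg0]; ring
  have hΔdeg : ∀ P : Polynomial K, (Δ P).degree ≤ P.degree := by
    intro P
    refine (degree_le_iff_coeff_zero _ _).mpr fun m hm => ?_
    exact hΔzero P m (coeff_eq_zero_of_degree_lt hm)
  -- evaluation
  set e : Polynomial K →ₐ[K] F := aeval η with he_def
  have hinj : Function.Injective e := transcendental_iff_injective.mp htrans
  have hδpow : ∀ n : ℕ, δ (η ^ n) = n * p * η ^ n := by
    intro n
    induction n with
    | zero => simpa using hδ1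
    | succ n ih =>
      rw [pow_succ, hmul, ih, hδη]
      push_cast
      ring
  have hkey : ∀ P : Polynomial K, δ (e P) = e (Δ P) := by
    intro P
    induction P using Polynomial.induction_on' with
    | add u v hu hv =>
      calc δ (e (u + v)) = δ (e u) + δ (e v) := by rw [map_add, hadd]
      _ = e (Δ u) + e (Δ v) := by rw [hu, hv]
      _ = e (Δ (u + v)) := by rw [hΔadd u v]; exact (map_add e (Δ u) (Δ v)).symm
    | monomial n a =>
      have hDm : Dmap g hg0 (monomial n a) = monomial n (g a) := by
        ext m
        rw [Dmap_coeff, coeff_monomial, coeff_monomial]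
        split_ifs <;> simp [hg0, hδ0]
      have hga : ((g a : K) : F) = δ (a : F) := rfl
      cases n with
      | zero =>
        have hΔm : Δ (monomial 0 a) = monomial 0 (g a) := by
          have hder : derivative (monomial 0 a) = 0 := by simp [derivative_monomial]
          rw [hΔ_def]
          simp only [hder, mul_zero, add_zero, hDm]
        rw [hΔm]
        simp [he_def, aeval_monomial, hcoe, hga]
      | succ n =>
        have hΔm : Δ (monomial (n + 1) a)
            = monomial (n + 1) (g a) + C pK * X * monomial n (a * (n + 1)) := by
          simp [hΔ_def, hDm, derivative_monomial]
        have e1 : e (monomial (n + 1) a) = (a : F) * η ^ (n + 1) := by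
          simp [he_def, aeval_monomial, hcoe]
        have e2 : e (monomial (n + 1) (g a)) = δ (a : F) * η ^ (n + 1) := by
          simp [he_def, aeval_monomial, hcoe, hga]
        have e3 : e (C pK * X * monomial n (a * (n + 1)))
            = p * η * ((a : F) * (n + 1) * η ^ n) := by
          simp only [map_mul, he_def, aeval_C, aeval_X, aeval_monomial, hcoe]
          push_cast
          ring
        rw [hΔm, map_add, e1, e2, e3, hmul, hδpow]
        push_cast
        rw [pow_succ]
        ring
  have hBne : B ≠ 0 := hB.ne_zero
  set u : F := e R with hu_def
  set v : F := e B with hv_def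
  have hv : v ≠ 0 := by
    intro h
    exact hBne (hinj (by simpa using h))
  -- the key field identity
  have hfield : c * η * v ^ 2 = e (Δ Q) * v ^ 2 + δ u * v - u * δ v := by
    have h2 : δ u = (u / v) * δ v + δ (u / v) * v := by
      conv_lhs => rw [show u = (u / v) * v from (div_mul_cancel₀ u hv).symm]
      exact hmul _ _
    have h3 : c * η = e (Δ Q) + δ (u / v) := by
      rw [← hf, hrep, hadd, hkey]
    have h4 : u / v * v = u := div_mul_cancel₀ u hv
    rw [h3, h2]
    linear_combination -δ v * h4
  -- transfer it to a polynomial identity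
  have hpoly : C cK * X * B ^ 2 = Δ Q * B ^ 2 + (Δ R * B - R * Δ B) := by
    apply hinj
    have hC : e (C cK) = c := by rw [he_def]; rw [aeval_C]; exact hcoe cK
    have hX : e X = η := by rw [he_def]; exact aeval_X η
    simp only [map_mul, map_add, map_sub, map_pow, hC, hX, ← hkey R, ← hkey B]
    rw [← hu_def, ← hv_def]
    linear_combination hfield
  have hdvd : B ∣ R * Δ B := by
    have h : R * Δ B = Δ Q * B ^ 2 + Δ R * B - C cK * X * B ^ 2 := by
      linear_combination hpoly
    rw [h]
    exact dvd_sub (dvd_add ⟨Δ Q * B, by ring⟩ ⟨Δ R, by ring⟩) ⟨C cK * X * B, by ring⟩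
  obtain ⟨S, hS⟩ := hcop.symm.dvd_of_dvd_mul_left hdvd
  have hSdeg : S.degree ≤ 0 := by
    rcases eq_or_ne S 0 with rfl | hS0
    · simp
    · have h1 : (Δ B).degree ≤ B.degree := hΔdeg B
      rw [hS] at h1
      have h2 : (B * S).natDegree ≤ B.natDegree := natDegree_le_natDegree h1
      rw [natDegree_mul hBne hS0] at h2
      have h3 : S.natDegree = 0 := by omega
      obtain ⟨s, hs⟩ := natDegree_eq_zero.mp h3
      rw [← hs]
      exact degree_C_le
  have hRS : (Δ R - R * S).degree < B.degree := by
    refine lt_of_le_of_lt (degree_sub_le _ _) (max_lt (lt_of_le_of_lt (hΔdeg R) hRB) ?_)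
    calc (R * S).degree = R.degree + S.degree := degree_mul
    _ ≤ R.degree + 0 := add_le_add (le_refl _) hSdeg
    _ = R.degree := add_zero _
    _ < B.degree := hRB
  have hGB : (C cK * X - Δ Q) * B = Δ R - R * S := by
    apply mul_right_cancel₀ hBne
    rw [hS] at hpoly
    linear_combination hpoly
  have hG : C cK * X - Δ Q = 0 := by
    by_contra hG0
    have h1 : B.degree ≤ ((C cK * X - Δ Q) * B).degree := by
      rw [degree_mul]
      exact le_add_of_nonneg_left (zero_le_degree_iff.mpr hG0)
    rw [hGB] at h1
    exact absurd (lt_of_le_of_lt h1 hRS) (lt_irrefl _)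
  have hCXQ : C cK * X = Δ Q := sub_eq_zero.mp hG
  -- compare coefficients at degree 1
  have hcoeff : cK = g (Q.coeff 1) + pK * Q.coeff 1 := by
    have h := congrArg (fun P => P.coeff 1) hCXQ
    simp only [hΔcoeffsucc Q 0, coeff_C_mul, coeff_X_one, mul_one, Nat.cast_zero, zero_add] at h
    exact h
  have hfin := congrArg (fun x : K => (x : F)) hcoeff
  simp only [Subfield.coe_add, Subfield.coe_mul, mul_one] at hfin
  exact hfin
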